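/- Periodic realizability dominates finite realizability (Proposition 6.1): Let (n, E, t, h, z) be ℤ-labelled graph data. If the data is d-realizable (in the periodic sense), then the simple graph si(Ĝ) is d-realizable in the finite sense: for every m and every map q : Fin n → ℝ^m there exists q' : Fin n → ℝ^d with ‖q' i − q' j‖ = ‖q i − q j‖ for every edge {i, j} of si(Ĝ). -/

import Mathlib

open Filter Topology

private lemma sqrt_add_le' {a b : ℝ} (ha : 0 ≤ a) (hb : 0 ≤ b) :
    Real.sqrt (a + b) ≤ Real.sqrt a + Real.sqrt b := by
  have h1 := Real.sqrt_nonneg a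
  have h2 := Real.sqrt_nonneg b
  have key : a + b ≤ (Real.sqrt a + Real.sqrt b) ^ 2 := by
    nlinarith [Real.sq_sqrt ha, Real.sq_sqrt hb, mul_nonneg h1 h2]
  calc Real.sqrt (a + b) ≤ Real.sqrt ((Real.sqrt a + Real.sqrt b) ^ 2) :=
        Real.sqrt_le_sqrt key
    _ = Real.sqrt a + Real.sqrt b := Real.sqrt_sq (by positivity)

/-- extension of a vector by one extra coordinate -/
noncomputable def extv {m : ℕ} (x : EuclideanSpace ℝ (Fin m)) (c : ℝ) :
    EuclideanSpace ℝ (Fin (m + 1)) := WithLp.toLp 2 (Fin.snoc x.ofLp c : Fin (m+1) → ℝ)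

lemma extv_norm {m : ℕ} (x : EuclideanSpace ℝ (Fin m)) (c : ℝ) :
    ‖extv x c‖ = Real.sqrt (‖x‖ ^ 2 + c ^ 2) := by
  rw [EuclideanSpace.norm_eq, Fin.sum_univ_castSucc]
  congr 1
  have h1 : ∑ i : Fin m, ‖extv x c i.castSucc‖ ^ 2 = ∑ i : Fin m, ‖x i‖ ^ 2 := by
    refine Finset.sum_congr rfl fun i _ => ?_
    congr 1
    show ‖(Fin.snoc x c : Fin (m+1) → ℝ) i.castSucc‖ = ‖x i‖
    rw [Fin.snoc_castSucc]
  rw [h1]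
  congr 1
  · rw [EuclideanSpace.norm_eq, Real.sq_sqrt (by positivity)]
  · show ‖(Fin.snoc x c : Fin (m+1) → ℝ) (Fin.last m)‖ ^ 2 = c ^ 2
    rw [Fin.snoc_last, Real.norm_eq_abs, sq_abs]

private lemma walk_bound {V : Type*} {d : ℕ} {G : SimpleGraph V}
    {f : V → EuclideanSpace ℝ (Fin d)} {C : ℝ}
    (hf : ∀ u v, G.Adj u v → ‖f u - f v‖ ≤ C) :
    ∀ {a b : V} (w : G.Walk a b), ‖f a - f b‖ ≤ (w.length : ℝ) * C := by
  intro a b w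
  induction w with
  | nil => simp
  | @cons u v x hadj p ih =>
    have hC : 0 ≤ C := le_trans (norm_nonneg _) (hf u v hadj)
    calc ‖f u - f x‖ ≤ ‖f u - f v‖ + ‖f v - f x‖ := by
          have := norm_add_le (f u - f v) (f v - f x); simpa using this
      _ ≤ C + (p.length : ℝ) * C := add_le_add (hf u v hadj) ih
      _ = (((SimpleGraph.Walk.cons hadj p).length : ℝ)) * C := by
          rw [SimpleGraph.Walk.length_cons]; push_cast; ring



/-- The edge vector of edge `e` of ℤ-labelled graph data with tail map `t`, head map `h`
and labels `z`, with respect to a point configuration `p` and lattice vector `ℓ`. -/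
noncomputable def edgeVec {V E : Type*} {m : ℕ} (t h : E → V) (z : E → ℤ)
    (p : V → EuclideanSpace ℝ (Fin m)) (ℓ : EuclideanSpace ℝ (Fin m)) (e : E) :
    EuclideanSpace ℝ (Fin m) :=
  p (h e) + (z e : ℝ) • ℓ - p (t e)

/-- ℤ-labelled graph data `(V, E, t, h, z)` is `d`-realizable if every periodic framework
`(p, ℓ)` of the data in any dimension `m` admits an equivalent periodic framework in `ℝ^d`. -/
def IsRealizable (V E : Type*) (t h : E → V) (z : E → ℤ) (d : ℕ) : Prop :=
  ∀ (m : ℕ) (p : V → EuclideanSpace ℝ (Fin m)) (ℓ : EuclideanSpace ℝ (Fin m)), ℓ ≠ 0 →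
    ∃ (q : V → EuclideanSpace ℝ (Fin d)) (ℓ' : EuclideanSpace ℝ (Fin d)), ℓ' ≠ 0 ∧
      ‖ℓ'‖ = ‖ℓ‖ ∧ ∀ e : E, ‖edgeVec t h z q ℓ' e‖ = ‖edgeVec t h z p ℓ e‖

/-- Proposition 6.1: periodic realizability dominates finite realizability.  If ℤ-labelled
graph data `(n, E, t, h, z)` is `d`-realizable in the periodic sense, then the simple
graph `si(Ĝ)` is `d`-realizable in the finite sense: every point configuration
`q : Fin n → ℝ^m` admits `q' : Fin n → ℝ^d` preserving the lengths of all edges of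
`si(Ĝ)`. -/
theorem periodic_dominates_finite_realizable (n : ℕ) (hn : 1 ≤ n) (E : Type*) [Fintype E]
    (t h : E → Fin n) (z : E → ℤ) (d : ℕ)
    (hreal : IsRealizable (Fin n) E t h z d) :
    ∀ (m : ℕ) (q : Fin n → EuclideanSpace ℝ (Fin m)),
      ∃ q' : Fin n → EuclideanSpace ℝ (Fin d),
        ∀ i j : Fin n, i ≠ j → (∃ e : E, ({t e, h e} : Set (Fin n)) = {i, j}) →
          ‖q' i - q' j‖ = ‖q i - q j‖ := by
  intro m q
  classical
  set p : Fin n → EuclideanSpace ℝ (Fin (m + 1)) := fun i => extv (q i) 0 with hp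
  set ℓ : EuclideanSpace ℝ (Fin (m + 1)) := extv 0 1 with hℓ
  have hℓnorm : ‖ℓ‖ = 1 := by rw [hℓ, extv_norm]; simp
  have hℓ0 : ℓ ≠ 0 := by
    intro h0
    rw [h0, norm_zero] at hℓnorm
    exact zero_ne_one hℓnorm
  set K : ℕ → ℝ := fun k => (k : ℝ) + 1 with hK
  have hKpos : ∀ k, 0 < K k := fun k => by positivity
  have hK1 : ∀ k, 1 ≤ K k := fun k => by simp [hK]
  have H : ∀ k : ℕ, ∃ (Q : Fin n → EuclideanSpace ℝ (Fin d))
      (L : EuclideanSpace ℝ (Fin d)), L ≠ 0 ∧ ‖L‖ = ‖ℓ‖ ∧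
      ∀ e : E, ‖edgeVec t h z Q L e‖ = ‖edgeVec t h z (fun i => K k • p i) ℓ e‖ :=
    fun k => hreal (m + 1) (fun i => K k • p i) ℓ hℓ0
  choose Q L _hL0 hLn hQ using H
  -- edge-length computation for the scaled framework
  have hEdgeNorm : ∀ (k : ℕ) (e : E),
      ‖edgeVec t h z (fun i => K k • p i) ℓ e‖
        = Real.sqrt ((K k) ^ 2 * ‖q (h e) - q (t e)‖ ^ 2 + ((z e : ℝ)) ^ 2) := by
    intro k e
    have hvec : edgeVec t h z (fun i => K k • p i) ℓ e
        = extv (K k • (q (h e) - q (t e))) (z e) := by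
      ext j
      refine Fin.lastCases ?_ (fun i => ?_) j
      · simp [edgeVec, extv, hp, hℓ, PiLp.add_apply, PiLp.sub_apply, PiLp.smul_apply,
          Fin.snoc_last]
      · simp [edgeVec, extv, hp, hℓ, PiLp.add_apply, PiLp.sub_apply, PiLp.smul_apply,
          Fin.snoc_castSucc, mul_sub]
    rw [hvec, extv_norm, norm_smul, Real.norm_eq_abs, mul_pow, sq_abs]
  -- rescaled configurations
  set s : ℕ → Fin n → EuclideanSpace ℝ (Fin d) := fun k i => (K k)⁻¹ • Q k i with hsdef
  have hs : ∀ (k : ℕ) (e : E),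
      |‖s k (h e) - s k (t e)‖ - ‖q (h e) - q (t e)‖| ≤ 2 * |(z e : ℝ)| / K k := by
    intro k e
    set D := ‖q (h e) - q (t e)‖ with hD
    have hDnn : 0 ≤ D := norm_nonneg _
    have h1 : s k (h e) - s k (t e) + ((z e : ℝ) / K k) • L k
        = (K k)⁻¹ • edgeVec t h z (Q k) (L k) e := by
      simp only [hsdef, edgeVec, smul_sub, smul_add, smul_smul, div_eq_inv_mul]
      abel
    have h2 : ‖s k (h e) - s k (t e) + ((z e : ℝ) / K k) • L k‖
        = Real.sqrt (D ^ 2 + ((z e : ℝ) / K k) ^ 2) := by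
      rw [h1, norm_smul, hQ k e, hEdgeNorm k e, Real.norm_eq_abs,
        abs_of_pos (inv_pos.mpr (hKpos k))]
      rw [show D ^ 2 + ((z e : ℝ) / K k) ^ 2
          = ((K k)⁻¹) ^ 2 * ((K k) ^ 2 * D ^ 2 + (z e : ℝ) ^ 2) by
        field_simp
        rw [add_div, mul_div_cancel_right₀ _ (pow_ne_zero 2 (hKpos k).ne')]]
      rw [Real.sqrt_mul (by positivity), Real.sqrt_sq (by positivity)]
    set u := s k (h e) - s k (t e) with hu
    set wv := ((z e : ℝ) / K k) • L k with hwv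
    have hwnorm : ‖wv‖ = |(z e : ℝ)| / K k := by
      rw [hwv, norm_smul, hLn k, hℓnorm, mul_one, Real.norm_eq_abs, abs_div,
        abs_of_pos (hKpos k)]
    have e1 : |‖u‖ - ‖u + wv‖| ≤ |(z e : ℝ)| / K k := by
      have h3 := abs_norm_sub_norm_le u (u + wv)
      have h4 : u - (u + wv) = -wv := by abel
      rw [h4, norm_neg, hwnorm] at h3
      exact h3
    have hS_ge : D ≤ Real.sqrt (D ^ 2 + ((z e : ℝ) / K k) ^ 2) := by
      have h5 : Real.sqrt (D ^ 2) ≤ Real.sqrt (D ^ 2 + ((z e : ℝ) / K k) ^ 2) :=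
        Real.sqrt_le_sqrt (le_add_of_nonneg_right (sq_nonneg _))
      rwa [Real.sqrt_sq hDnn] at h5
    have hS_le : Real.sqrt (D ^ 2 + ((z e : ℝ) / K k) ^ 2) ≤ D + |(z e : ℝ)| / K k := by
      have h6 := sqrt_add_le' (sq_nonneg D) (sq_nonneg ((z e : ℝ) / K k))
      rw [Real.sqrt_sq hDnn, Real.sqrt_sq_eq_abs, abs_div, abs_of_pos (hKpos k)] at h6
      exact h6
    have e2 : |‖u + wv‖ - D| ≤ |(z e : ℝ)| / K k := by
      rw [h2]
      rw [abs_le]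
      constructor <;> [linarith; linarith]
    calc |‖u‖ - D| ≤ |‖u‖ - ‖u + wv‖| + |‖u + wv‖ - D| := abs_sub_le _ _ _
      _ ≤ 2 * |(z e : ℝ)| / K k := by
          have := e1; have := e2
          rw [show 2 * |(z e : ℝ)| / K k = |(z e : ℝ)| / K k + |(z e : ℝ)| / K k by ring]
          linarith
  -- the simple graph si(Ĝ)
  set G : SimpleGraph (Fin n) :=
    { Adj := fun i j => i ≠ j ∧ ∃ e : E, ({t e, h e} : Set (Fin n)) = {i, j},
      symm := ⟨by
        rintro i j ⟨hij, e, he⟩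
        exact ⟨hij.symm, e, he.trans (Set.pair_comm i j)⟩⟩,
      loopless := ⟨fun i hi => hi.1 rfl⟩ } with hG
  set ρ : Fin n → Fin n := fun i => (G.connectedComponentMk i).out with hρ
  have hρreach : ∀ i, G.Reachable i (ρ i) := by
    intro i
    have h0 : G.connectedComponentMk ((G.connectedComponentMk i).out)
        = G.connectedComponentMk i := (G.connectedComponentMk i).out_eq
    exact (SimpleGraph.ConnectedComponent.eq.mp h0).symm
  have hρadj : ∀ i j, G.Adj i j → ρ i = ρ j := by
    intro i j hij
    have : G.connectedComponentMk i = G.connectedComponentMk j :=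
      SimpleGraph.ConnectedComponent.eq.mpr hij.reachable
    exact congrArg Quot.out this
  -- uniform edge bound
  set C : ℝ := ∑ e : E, (‖q (h e) - q (t e)‖ + 2 * |(z e : ℝ)|) with hCdef
  have hC0 : 0 ≤ C := Finset.sum_nonneg fun e _ => by positivity
  have hsC : ∀ (k : ℕ) (e : E),
      ‖s k (h e) - s k (t e)‖ ≤ ‖q (h e) - q (t e)‖ + 2 * |(z e : ℝ)| := by
    intro k e
    have h1 := hs k e
    have h2 : 2 * |(z e : ℝ)| / K k ≤ 2 * |(z e : ℝ)| := by
      rw [div_le_iff₀ (hKpos k)]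
      nlinarith [hK1 k, abs_nonneg (z e : ℝ)]
    have := abs_le.mp h1
    linarith [this.2]
  have hedgeC : ∀ (k : ℕ) (u v : Fin n), G.Adj u v → ‖s k u - s k v‖ ≤ C := by
    intro k u v huv
    obtain ⟨hne, e, he⟩ := huv
    have hb : ‖s k u - s k v‖ ≤ ‖q (h e) - q (t e)‖ + 2 * |(z e : ℝ)| := by
      rcases Set.pair_eq_pair_iff.mp he with ⟨h1, h2⟩ | ⟨h1, h2⟩
      · rw [← h1, ← h2, norm_sub_rev]
        exact hsC k e
      · rw [← h1, ← h2]
        exact hsC k e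
    exact hb.trans (Finset.single_le_sum (f := fun e : E =>
      ‖q (h e) - q (t e)‖ + 2 * |(z e : ℝ)|) (fun e _ => by positivity)
      (Finset.mem_univ e))
  -- normalized configurations and boundedness
  set r : ℕ → Fin n → EuclideanSpace ℝ (Fin d) := fun k i => s k i - s k (ρ i) with hrdef
  set w : (i : Fin n) → G.Walk i (ρ i) := fun i => (hρreach i).some with hwdef
  set B : Fin n → ℝ := fun i => ((w i).length : ℝ) * C with hBdef
  have hrB : ∀ (k : ℕ) (i : Fin n), ‖r k i‖ ≤ B i := fun k i =>
    walk_bound (hedgeC k) (w i)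
  set Bmax : ℝ := ∑ i : Fin n, B i with hBmax
  have hBnn : ∀ i, 0 ≤ B i := fun i => mul_nonneg (Nat.cast_nonneg _) hC0
  have hBmax0 : 0 ≤ Bmax := Finset.sum_nonneg fun i _ => hBnn i
  have hmem : ∀ k, r k ∈ Metric.closedBall (0 : Fin n → EuclideanSpace ℝ (Fin d)) Bmax := by
    intro k
    rw [Metric.mem_closedBall, dist_zero_right]
    rw [pi_norm_le_iff_of_nonneg hBmax0]
    intro i
    exact (hrB k i).trans (Finset.single_le_sum (fun j _ => hBnn j) (Finset.mem_univ i))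
  obtain ⟨a, -, φ, hφ, hconv⟩ :=
    (isCompact_closedBall (0 : Fin n → EuclideanSpace ℝ (Fin d)) Bmax).tendsto_subseq hmem
  refine ⟨a, fun i j hij hedge => ?_⟩
  obtain ⟨e, he⟩ := hedge
  have hadj : G.Adj i j := ⟨hij, e, he⟩
  -- convergence of the sequence of edge lengths to both values
  have hi : Tendsto (fun k => (r ∘ φ) k i) atTop (𝓝 (a i)) :=
    ((continuous_apply i).tendsto a).comp hconv
  have hj : Tendsto (fun k => (r ∘ φ) k j) atTop (𝓝 (a j)) :=
    ((continuous_apply j).tendsto a).comp hconv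
  have T1 : Tendsto (fun k => ‖r (φ k) i - r (φ k) j‖) atTop (𝓝 ‖a i - a j‖) :=
    (hi.sub hj).norm
  -- the estimate along the subsequence
  have hest : ∀ k : ℕ, |‖r k i - r k j‖ - ‖q i - q j‖| ≤ 2 * |(z e : ℝ)| / K k := by
    intro k
    have hrr : r k i - r k j = s k i - s k j := by
      rw [hrdef]
      simp only
      rw [hρadj i j hadj]
      abel
    rw [hrr]
    rcases Set.pair_eq_pair_iff.mp he with ⟨h1, h2⟩ | ⟨h1, h2⟩
    · have h3 : s k i - s k j = -(s k (h e) - s k (t e)) := by rw [← h1, ← h2]; abel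
      have h4 : q i - q j = -(q (h e) - q (t e)) := by rw [← h1, ← h2]; abel
      rw [h3, h4, norm_neg, norm_neg]
      exact hs k e
    · have h3 : s k i - s k j = s k (h e) - s k (t e) := by rw [← h1, ← h2]
      have h4 : q i - q j = q (h e) - q (t e) := by rw [← h1, ← h2]
      rw [h3, h4]
      exact hs k e
  have T2 : Tendsto (fun k => ‖r (φ k) i - r (φ k) j‖) atTop (𝓝 ‖q i - q j‖) := by
    rw [tendsto_iff_dist_tendsto_zero]
    have hb : ∀ k : ℕ, dist ‖r (φ k) i - r (φ k) j‖ ‖q i - q j‖ ≤ 2 * |(z e : ℝ)| / K k := by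
      intro k
      rw [Real.dist_eq]
      refine (hest (φ k)).trans ?_
      have hKle : K k ≤ K (φ k) := by
        have hc : (k : ℝ) ≤ (φ k : ℝ) := Nat.cast_le.mpr hφ.le_apply
        simp only [hK]
        linarith
      exact div_le_div_of_nonneg_left (by positivity) (hKpos k) hKle
    have hzero : Tendsto (fun k : ℕ => 2 * |(z e : ℝ)| / K k) atTop (𝓝 0) := by
      have h7 : Tendsto (fun k : ℕ => 2 * |(z e : ℝ)| / ((k + 1 : ℕ) : ℝ)) atTop (𝓝 0) :=
        (tendsto_const_div_atTop_nhds_zero_nat (2 * |(z e : ℝ)|)).comp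
          (tendsto_add_atTop_nat 1)
      convert h7 using 2 with k
      simp only [hK]
      push_cast
      ring
    exact squeeze_zero (fun k => dist_nonneg) hb hzero
  exact tendsto_nhds_unique T1 T2
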